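/- Let h̃_1, …, h̃_n be frequency histograms with d bins and weights π_j > 0 summing to 1, with normalized arithmetic mean ã^i = Σ_j π_j h̃_j^i and normalized geometric mean g̃^i = Π_j (h̃_j^i)^{π_j} / Σ_{k=1}^d Π_j (h̃_j^k)^{π_j}. A frequency histogram c̃ (with all coordinates positive) minimizes x ↦ Σ_j π_j J(h̃_j, x) over the frequency histograms if and only if there exists λ ∈ ℝ such that for every i = 1, …, d, log(c̃^i/g̃^i) + 1 − ã^i/c̃^i + λ = 0; equivalently, the quantity log(c̃^i/g̃^i) − ã^i/c̃^i does not depend on i. -/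

import Mathlib

open scoped BigOperators

/-- Jeffreys divergence between positive histograms with `d` bins. -/
noncomputable def Jeffreys {d : ℕ} (p q : Fin d → ℝ) : ℝ :=
  ∑ i, (p i - q i) * Real.log (p i / q i)

/-- a frequency histogram `c̃` minimizes the weighted Jeffreys objective
over the frequency histograms iff there is a `λ` with
`log(c̃ⁱ/g̃ⁱ) + 1 − ãⁱ/c̃ⁱ + λ = 0` for all `i`; equivalently, iff
`log(c̃ⁱ/g̃ⁱ) − ãⁱ/c̃ⁱ` does not depend on `i`. -/
lemma grad_ineq (a L t s : ℝ) (ha : 0 ≤ a) (ht : 0 < t) (hs : 0 < s) :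
    (Real.log t + 1 - a / t - L) * (s - t) ≤
      (s * Real.log s - a * Real.log s - L * s) -
        (t * Real.log t - a * Real.log t - L * t) := by
  have h1 : Real.log (s / t) ≤ s / t - 1 := Real.log_le_sub_one_of_pos (by positivity)
  have h2 : Real.log (t / s) ≤ t / s - 1 := Real.log_le_sub_one_of_pos (by positivity)
  rw [Real.log_div hs.ne' ht.ne'] at h1
  rw [Real.log_div ht.ne' hs.ne'] at h2
  have e1 : s / t * t = s := div_mul_cancel₀ _ ht.ne'
  have e2 : t / s * s = t := div_mul_cancel₀ _ hs.ne'
  have e3 : a / t * t = a := div_mul_cancel₀ _ ht.ne'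
  nlinarith [mul_le_mul_of_nonneg_left h1 ha, mul_le_mul_of_nonneg_left h2 hs.le,
    mul_pos ht hs]

lemma phi_hasDerivAt (a L t : ℝ) (ht : 0 < t) :
    HasDerivAt (fun u => u * Real.log u - a * Real.log u - L * u)
      (Real.log t + 1 - a / t - L) t := by
  have h1 : HasDerivAt (fun u : ℝ => u * Real.log u) (Real.log t + 1) t := by
    have := (hasDerivAt_id t).fun_mul (Real.hasDerivAt_log ht.ne')
    simpa [mul_inv_cancel₀ ht.ne'] using this
  have h2 : HasDerivAt (fun u : ℝ => a * Real.log u) (a / t) t := by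
    have := (Real.hasDerivAt_log ht.ne').const_mul a
    simpa [div_eq_mul_inv, mul_comm] using this
  have h3 : HasDerivAt (fun u : ℝ => L * u) L t := by
    simpa using (hasDerivAt_id t).const_mul L
  convert (h1.fun_sub h2).fun_sub h3 using 1


theorem jeffreys_frequency_centroid_characterization
    (d n : ℕ) (h : Fin n → Fin d → ℝ) (π : Fin n → ℝ)
    (hpos : ∀ j i, 0 < h j i) (hfreq : ∀ j, ∑ i, h j i = 1)
    (hπ : ∀ j, 0 < π j) (hπ1 : ∑ j, π j = 1)
    (c : Fin d → ℝ) (hc : ∀ i, 0 < c i) (hc1 : ∑ i, c i = 1)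
    (a : Fin d → ℝ) (ha : a = fun i => ∑ j, π j * h j i)
    (g : Fin d → ℝ) (hg : g = fun i => (∏ j, h j i ^ π j) / ∑ k, ∏ j, h j k ^ π j) :
    ((∀ x : Fin d → ℝ, (∀ i, 0 < x i) → (∑ i, x i = 1) →
        ∑ j, π j * Jeffreys (h j) c ≤ ∑ j, π j * Jeffreys (h j) x) ↔
      ∃ lam : ℝ, ∀ i, Real.log (c i / g i) + 1 - a i / c i + lam = 0) ∧
    ((∀ x : Fin d → ℝ, (∀ i, 0 < x i) → (∑ i, x i = 1) →
        ∑ j, π j * Jeffreys (h j) c ≤ ∑ j, π j * Jeffreys (h j) x) ↔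
      ∀ i i' : Fin d,
        Real.log (c i / g i) - a i / c i = Real.log (c i' / g i') - a i' / c i') := by
  -- nonemptiness
  haveI hdne : Nonempty (Fin d) := by
    by_contra hcon
    rw [not_nonempty_iff] at hcon
    rw [Finset.univ_eq_empty, Finset.sum_empty] at hc1
    norm_num at hc1
  haveI hnne : Nonempty (Fin n) := by
    by_contra hcon
    rw [not_nonempty_iff] at hcon
    rw [Finset.univ_eq_empty, Finset.sum_empty] at hπ1
    norm_num at hπ1
  have i0 : Fin d := Classical.arbitrary _
  -- abbreviations
  set S : ℝ := ∑ k, ∏ j, h j k ^ π j with hSdef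
  obtain ⟨L, hLdef⟩ : ∃ L : Fin d → ℝ, ∀ i, L i = ∑ j, π j * Real.log (h j i) :=
    ⟨_, fun _ => rfl⟩
  obtain ⟨φ, hφdef⟩ : ∃ φ : Fin d → ℝ → ℝ,
      ∀ i u, φ i u = u * Real.log u - a i * Real.log u - L i * u := ⟨_, fun _ _ => rfl⟩
  obtain ⟨D, hDdef⟩ : ∃ D : Fin d → ℝ,
      ∀ i, D i = Real.log (c i) + 1 - a i / c i - L i := ⟨_, fun _ => rfl⟩
  obtain ⟨C, hCdef⟩ : ∃ C : ℝ, C = ∑ i, ∑ j, π j * (h j i * Real.log (h j i)) :=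
    ⟨_, rfl⟩
  have hPpos : ∀ i, 0 < ∏ j, h j i ^ π j := fun i =>
    Finset.prod_pos fun j _ => Real.rpow_pos_of_pos (hpos j i) _
  have hSpos : 0 < S := Finset.sum_pos (fun k _ => hPpos k) Finset.univ_nonempty
  have hapos : ∀ i, 0 < a i := by
    intro i; rw [ha]
    exact Finset.sum_pos (fun j _ => mul_pos (hπ j) (hpos j i)) Finset.univ_nonempty
  have hgpos : ∀ i, 0 < g i := by
    intro i; rw [hg]; exact div_pos (hPpos i) hSpos
  -- objective rewrite
  have hF : ∀ x : Fin d → ℝ, (∀ i, 0 < x i) →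
      ∑ j, π j * Jeffreys (h j) x = C + ∑ i, φ i (x i) := by
    intro x hx
    have step1 : ∀ j, π j * Jeffreys (h j) x
        = ∑ i, π j * ((h j i - x i) * (Real.log (h j i) - Real.log (x i))) := by
      intro j
      rw [Jeffreys, Finset.mul_sum]
      refine Finset.sum_congr rfl fun i _ => ?_
      rw [Real.log_div (hpos j i).ne' (hx i).ne']
    rw [Finset.sum_congr rfl fun j _ => step1 j, Finset.sum_comm, hCdef,
      ← Finset.sum_add_distrib]
    refine Finset.sum_congr rfl fun i _ => ?_
    have expand : ∀ j, π j * ((h j i - x i) * (Real.log (h j i) - Real.log (x i)))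
        = π j * (h j i * Real.log (h j i)) - (π j * h j i) * Real.log (x i)
          - (π j * Real.log (h j i)) * x i + π j * (x i * Real.log (x i)) := by
      intro j; ring
    rw [Finset.sum_congr rfl fun j _ => expand j]
    simp only [Finset.sum_add_distrib, Finset.sum_sub_distrib, ← Finset.sum_mul,
      ← Finset.mul_sum]
    have ha' : (∑ j, π j * h j i) = a i := by rw [ha]
    have hL' : (∑ j, π j * Real.log (h j i)) = L i := (hLdef i).symm
    rw [hπ1, ha', hL']
    simp only [hφdef]
    ring
  -- gradient inequality for each coordinate
  have hgi : ∀ i (s : ℝ), 0 < s → D i * (s - c i) ≤ φ i s - φ i (c i) := by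
    intro i s hs
    simpa only [hDdef, hφdef] using grad_ineq (a i) (L i) (c i) s (hapos i).le (hc i) hs
  -- main equivalence
  have hmain : (∀ x : Fin d → ℝ, (∀ i, 0 < x i) → (∑ i, x i = 1) →
      ∑ j, π j * Jeffreys (h j) c ≤ ∑ j, π j * Jeffreys (h j) x) ↔
      ∀ i i' : Fin d, D i = D i' := by
    constructor
    · -- minimality ⇒ constant gradient
      intro hmin i i'
      by_cases hii : i = i'
      · rw [hii]
      -- perturbation family
      set x : ℝ → Fin d → ℝ := fun t k =>
        c k + (if k = i then t else 0) + (if k = i' then -t else 0) with hxdef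
      have hx0 : x 0 = c := by funext k; simp [hxdef]
      have hxsum : ∀ t, ∑ k, x t k = 1 := by
        intro t
        simp [hxdef, Finset.sum_add_distrib, Finset.sum_ite_eq', hc1]
      set ε : ℝ := min (c i) (c i') with hεdef
      have hεpos : 0 < ε := lt_min (hc i) (hc i')
      have hxpos : ∀ t ∈ Set.Ioo (-ε) ε, ∀ k, 0 < x t k := by
        intro t ht k
        obtain ⟨ht1, ht2⟩ := ht
        have hεi : ε ≤ c i := by rw [hεdef]; exact min_le_left _ _
        have hεi' : ε ≤ c i' := by rw [hεdef]; exact min_le_right _ _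
        simp only [hxdef]
        split_ifs with h1 h2 h3
        · exact absurd (h1 ▸ h2 : i = i') hii
        · rw [h1]; linarith [hc i]
        · rw [h3]; linarith [hc i']
        · simpa using hc k
      set ψ : ℝ → ℝ := fun t => ∑ k, φ k (x t k) with hψdef
      have hloc : IsLocalMin ψ 0 := by
        filter_upwards [Ioo_mem_nhds (neg_neg_of_pos hεpos : -ε < 0) hεpos] with t ht
        have hmt := hmin (x t) (hxpos t ht) (hxsum t)
        rw [hF c hc, hF (x t) (hxpos t ht)] at hmt
        show ψ 0 ≤ ψ t
        have e0 : ψ 0 = ∑ k, φ k (c k) := by simp only [hψdef]; rw [hx0]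
        rw [e0]
        simp only [hψdef]
        linarith
      have hder : HasDerivAt ψ (D i - D i') 0 := by
        set A' : Fin d → ℝ := fun k => if k = i then D i else if k = i' then -(D i') else 0
          with hA'def
        have hsum : ∑ k, A' k = D i - D i' := by
          have : ∀ k, A' k = (if k = i then D i else 0) + (if k = i' then -(D i') else 0) := by
            intro k
            simp only [hA'def]
            split_ifs with h1 h2
            · exact absurd (h1 ▸ h2 : i = i') hii
            · ring
            · ring
            · ring
          rw [Finset.sum_congr rfl fun k _ => this k, Finset.sum_add_distrib]
          simp [Finset.sum_ite_eq']
          ring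
        have hterm : ∀ k ∈ Finset.univ, HasDerivAt (fun t => φ k (x t k)) (A' k) 0 := by
          intro k _
          by_cases h1 : k = i
          · subst h1
            have hxk : (fun t => φ k (x t k)) = fun t => φ k (c k + t) := by
              funext t; simp [hxdef, hii]
            rw [hxk]
            have inner : HasDerivAt (fun t : ℝ => c k + t) 1 0 := by
              simpa using (hasDerivAt_id (0:ℝ)).const_add (c k)
            have outer := phi_hasDerivAt (a k) (L k) (c k) (hc k)
            have := HasDerivAt.comp 0 (by simpa using outer) inner
            simpa [Function.comp_def, hA'def, hDdef, hφdef] using this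
          by_cases h2 : k = i'
          · subst h2
            have hxk : (fun t => φ k (x t k)) = fun t => φ k (c k + -t) := by
              funext t; simp [hxdef, h1]
            rw [hxk]
            have inner : HasDerivAt (fun t : ℝ => c k + -t) (-1) 0 := by
              simpa using ((hasDerivAt_id (0:ℝ)).neg.const_add (c k))
            have outer := phi_hasDerivAt (a k) (L k) (c k) (hc k)
            have := HasDerivAt.comp 0 (by simpa using outer) inner
            simpa [Function.comp_def, hA'def, h1, hDdef, hφdef] using this
          · have hxk : (fun t => φ k (x t k)) = fun _ => φ k (c k) := by
              funext t; simp [hxdef, h1, h2]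
            rw [hxk]
            simpa [hA'def, h1, h2] using (hasDerivAt_const (0:ℝ) (φ k (c k)))
        have := HasDerivAt.fun_sum hterm
        rw [hsum] at this
        exact this
      have := hloc.hasDerivAt_eq_zero hder
      linarith
    · -- constant gradient ⇒ minimality
      intro hD x hx hx1
      rw [hF c hc, hF x hx]
      have key : ∑ i, D i0 * (x i - c i) ≤ ∑ i, (φ i (x i) - φ i (c i)) :=
        Finset.sum_le_sum fun i _ => (hD i i0) ▸ hgi i (x i) (hx i)
      have hz : ∑ i, D i0 * (x i - c i) = 0 := by
        rw [← Finset.mul_sum, Finset.sum_sub_distrib, hx1, hc1]; ring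
      rw [Finset.sum_sub_distrib] at key
      linarith
  -- relating D to the statement's expressions
  have hrel : ∀ i, Real.log (c i / g i) - a i / c i = D i - 1 + Real.log S := by
    intro i
    have hlogP : Real.log (∏ j, h j i ^ π j) = L i := by
      rw [Real.log_prod fun j _ => (Real.rpow_pos_of_pos (hpos j i) _).ne', hLdef i]
      exact Finset.sum_congr rfl fun j _ => Real.log_rpow (hpos j i) _
    have hlogg : Real.log (g i) = L i - Real.log S := by
      rw [hg]
      rw [Real.log_div (hPpos i).ne' hSpos.ne', hlogP]
    rw [Real.log_div (hc i).ne' (hgpos i).ne', hlogg, hDdef]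
    ring
  constructor
  · rw [hmain]
    constructor
    · intro hD
      refine ⟨-(D i0) - Real.log S, fun i => ?_⟩
      have h1 := hrel i
      have h2 := hD i i0
      linear_combination h1 + h2
    · intro ⟨lam, hlam⟩ i i'
      have h1 := hlam i
      have h2 := hlam i'
      have r1 := hrel i
      have r2 := hrel i'
      linear_combination h1 - h2 - r1 + r2
  · rw [hmain]
    constructor
    · intro hD i i'
      have r1 := hrel i
      have r2 := hrel i'
      have h3 := hD i i'
      linear_combination r1 - r2 + h3
    · intro hcst i i'
      have r1 := hrel i
      have r2 := hrel i'
      have h3 := hcst i i'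
      linear_combination r2 - r1 + h3
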